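/- For m = 2k+1, n = 2l+1 with k,l ≥ 1, the set S = {(0,0), (0,l), (1,l+1), (k+1,l+1)} is a mixed resolving set of the torus graph T_{m,n} = C_m □ C_n; hence β_M(T_{2k+1,2l+1}) ≤ 4. -/

import Mathlib

open SimpleGraph

/-- Distance from a vertex `w` to an edge `e` (as a `Sym2`). -/
noncomputable def edist {V : Type*} (G : SimpleGraph V) (w : V) (e : Sym2 V) : Nat :=
  Sym2.lift ⟨fun u v => min (G.dist w u) (G.dist w v), fun u v => min_comm _ _⟩ e

/-- `S` is a mixed resolving set: every two distinct elements of `V ∪ E`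
are distinguished by the distance to some vertex of `S`. -/
def MixedResolvingSet {V : Type*} (G : SimpleGraph V) (S : Set V) : Prop :=
  (∀ u v : V, u ≠ v → ∃ w ∈ S, G.dist w u ≠ G.dist w v) ∧
  (∀ e ∈ G.edgeSet, ∀ f ∈ G.edgeSet, e ≠ f → ∃ w ∈ S, edist G w e ≠ edist G w f) ∧
  (∀ u : V, ∀ e ∈ G.edgeSet, ∃ w ∈ S, G.dist w u ≠ edist G w e)

/-- The mixed metric dimension of `G`. -/
noncomputable def mixedDim {V : Type*} (G : SimpleGraph V) : Nat :=
  sInf {n | ∃ S : Set V, MixedResolvingSet G S ∧ S.ncard = n}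

/-- The cycle graph on `ZMod n`. -/
def cycleZ (n : Nat) : SimpleGraph (ZMod n) :=
  SimpleGraph.fromRel (fun u v => u - v = 1)

/-- The torus graph `T_{m,n} = C_m □ C_n`. -/
def torus (m n : Nat) : SimpleGraph (ZMod m × ZMod n) :=
  (cycleZ m).boxProd (cycleZ n)


theorem y_cross_same (l N s1 s2 s1' s2' : ℕ) (hl : 1 ≤ l)
    (hN : N = 2*l ∨ N = 2*l+1) (hs1 : s1 ≤ 2*l) (hs1' : s1' ≤ 2*l)
    (ls2 : (s2 + l = s1) ∨ (s1 < l ∧ s2 = s1 + l + 1))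
    (ls2' : (s2' + l = s1') ∨ (s1' < l ∧ s2' = s1' + l + 1))
    (e : min s1 (N - s1) + min s2' (N - s2') = min s2 (N - s2) + min s1' (N - s1')) :
    s1 = s1' := by omega

theorem x_cross_same (k M t1 t3 t4 t1' t3' t4' : ℕ) (hk : 1 ≤ k)
    (hM : M = 2*k ∨ M = 2*k+1) (ht1 : t1 ≤ 2*k) (ht1' : t1' ≤ 2*k)
    (lt3 : (t3 + 1 = t1) ∨ (t1 = 0 ∧ t3 = 2*k))
    (lt4 : (t4 + (k+1) = t1) ∨ (t1 ≤ k ∧ t4 = t1 + k))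
    (lt3' : (t3' + 1 = t1') ∨ (t1' = 0 ∧ t3' = 2*k))
    (lt4' : (t4' + (k+1) = t1') ∨ (t1' ≤ k ∧ t4' = t1' + k))
    (e : min t3 (M - t3) + min t4' (M - t4') = min t4 (M - t4) + min t3' (M - t3')) :
    t1 = t1' := by
  rcases lt3 with h3|h3 <;> rcases lt4 with h4|h4 <;> rcases lt3' with h3'|h3' <;>
    rcases lt4' with h4'|h4' <;> omega

theorem x_finish_same (k M t1 t3 t1' t3' : ℕ) (hk : 1 ≤ k)
    (hM : M = 2*k ∨ M = 2*k+1) (ht1 : t1 ≤ 2*k) (ht1' : t1' ≤ 2*k)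
    (lt3 : (t3 + 1 = t1) ∨ (t1 = 0 ∧ t3 = 2*k))
    (lt3' : (t3' + 1 = t1') ∨ (t1' = 0 ∧ t3' = 2*k))
    (e1 : min t1 (M - t1) = min t1' (M - t1'))
    (e3 : min t3 (M - t3) = min t3' (M - t3')) :
    t1 = t1' := by omega

set_option maxHeartbeats 3200000 in
theorem x_contra_VH (k t1 t3 t4 t1' t3' t4' : ℕ) (hk : 1 ≤ k)
    (ht1 : t1 ≤ 2*k) (ht1' : t1' ≤ 2*k)
    (lt3 : (t3 + 1 = t1) ∨ (t1 = 0 ∧ t3 = 2*k))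
    (lt4 : (t4 + (k+1) = t1) ∨ (t1 ≤ k ∧ t4 = t1 + k))
    (lt3' : (t3' + 1 = t1') ∨ (t1' = 0 ∧ t3' = 2*k))
    (lt4' : (t4' + (k+1) = t1') ∨ (t1' ≤ k ∧ t4' = t1' + k))
    (e1 : min t1 (2*k+1 - t1) = min t1' (2*k - t1'))
    (e3 : min t3 (2*k+1 - t3) = min t3' (2*k - t3'))
    (e4 : min t4 (2*k+1 - t4) = min t4' (2*k - t4')) : False := by
  rcases lt3 with h3|h3 <;> rcases lt4 with h4|h4 <;> rcases lt3' with h3'|h3' <;>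
    rcases lt4' with h4'|h4' <;> omega

set_option maxHeartbeats 3200000 in
theorem y_contra_VVe (l s1 s2 s3 s1' s2' s3' : ℕ) (hl : 1 ≤ l)
    (hs1 : s1 ≤ 2*l) (hs1' : s1' ≤ 2*l)
    (ls2 : (s2 + l = s1) ∨ (s1 < l ∧ s2 = s1 + l + 1))
    (ls3 : (s3 + (l+1) = s1) ∨ (s1 ≤ l ∧ s3 = s1 + l))
    (ls2' : (s2' + l = s1') ∨ (s1' < l ∧ s2' = s1' + l + 1))
    (ls3' : (s3' + (l+1) = s1') ∨ (s1' ≤ l ∧ s3' = s1' + l))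
    (e1 : min s1 (2*l+1 - s1) = min s1' (2*l - s1'))
    (e2 : min s2 (2*l+1 - s2) = min s2' (2*l - s2'))
    (e3 : min s3 (2*l+1 - s3) = min s3' (2*l - s3')) : False := by
  rcases ls2 with h2|h2 <;> rcases ls3 with h3|h3 <;> rcases ls2' with h2'|h2' <;>
    rcases ls3' with h3'|h3' <;> omega

theorem y_cross_HVe (l s1 s2 s1' s2' : ℕ) (hl : 1 ≤ l)
    (hs1 : s1 ≤ 2*l) (hs1' : s1' ≤ 2*l)
    (ls2 : (s2 + l = s1) ∨ (s1 < l ∧ s2 = s1 + l + 1))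
    (ls2' : (s2' + l = s1') ∨ (s1' < l ∧ s2' = s1' + l + 1))
    (e : min s1 (2*l+1 - s1) + min s2' (2*l - s2')
       = min s2 (2*l+1 - s2) + min s1' (2*l - s1')) :
    s1 + s1' = 2*l := by omega

set_option maxHeartbeats 3200000 in
theorem x_cross_HVe (k t1 t3 t4 t1' t3' t4' : ℕ) (hk : 1 ≤ k)
    (ht1 : t1 ≤ 2*k) (ht1' : t1' ≤ 2*k)
    (lt3 : (t3 + 1 = t1) ∨ (t1 = 0 ∧ t3 = 2*k))
    (lt4 : (t4 + (k+1) = t1) ∨ (t1 ≤ k ∧ t4 = t1 + k))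
    (lt3' : (t3' + 1 = t1') ∨ (t1' = 0 ∧ t3' = 2*k))
    (lt4' : (t4' + (k+1) = t1') ∨ (t1' ≤ k ∧ t4' = t1' + k))
    (e : min t3 (2*k - t3) + min t4' (2*k+1 - t4')
       = min t4 (2*k - t4) + min t3' (2*k+1 - t3')) :
    t1 + t1' = 1 ∨ t1 + t1' = 2*k + 2 := by
  rcases lt3 with h3|h3 <;> rcases lt4 with h4|h4 <;> rcases lt3' with h3'|h3' <;>
    rcases lt4' with h4'|h4' <;> omega

set_option maxHeartbeats 3200000 in
theorem HVe_contra (k l t1 t3 s1 s3 t1' t3' s1' s3' : ℕ) (hk : 1 ≤ k) (hl : 1 ≤ l)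
    (ht1 : t1 ≤ 2*k) (ht1' : t1' ≤ 2*k) (hs1 : s1 ≤ 2*l) (hs1' : s1' ≤ 2*l)
    (lt3 : (t3 + 1 = t1) ∨ (t1 = 0 ∧ t3 = 2*k))
    (lt3' : (t3' + 1 = t1') ∨ (t1' = 0 ∧ t3' = 2*k))
    (ls3 : (s3 + (l+1) = s1) ∨ (s1 ≤ l ∧ s3 = s1 + l))
    (ls3' : (s3' + (l+1) = s1') ∨ (s1' ≤ l ∧ s3' = s1' + l))
    (hx : t1 + t1' = 1 ∨ t1 + t1' = 2*k + 2) (hy : s1 + s1' = 2*l)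
    (e1 : min t1 (2*k - t1) + min s1 (2*l+1 - s1)
        = min t1' (2*k+1 - t1') + min s1' (2*l - s1'))
    (e3 : min t3 (2*k - t3) + min s3 (2*l+1 - s3)
        = min t3' (2*k+1 - t3') + min s3' (2*l - s3')) : False := by
  rcases lt3 with h3|h3 <;> rcases lt3' with h3'|h3' <;> rcases ls3 with g3|g3 <;>
    rcases ls3' with g3'|g3' <;> rcases hx with hx|hx <;> omega
/- ### pair-type wrapper lemmas.
Conventions: object params (t1,t3,t4,s1,s2,s3); caps: V=(2k+1,2l+1), H=(2k,2l+1), Ve=(2k+1,2l). -/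

theorem arith_VV (k l t1 t3 t4 s1 s2 s3 t1' t3' t4' s1' s2' s3' : ℕ)
    (hk : 1 ≤ k) (hl : 1 ≤ l)
    (ht1 : t1 ≤ 2*k) (ht1' : t1' ≤ 2*k) (hs1 : s1 ≤ 2*l) (hs1' : s1' ≤ 2*l)
    (lt3 : (t3 + 1 = t1) ∨ (t1 = 0 ∧ t3 = 2*k))
    (lt4 : (t4 + (k+1) = t1) ∨ (t1 ≤ k ∧ t4 = t1 + k))
    (ls2 : (s2 + l = s1) ∨ (s1 < l ∧ s2 = s1 + l + 1))
    (ls3 : (s3 + (l+1) = s1) ∨ (s1 ≤ l ∧ s3 = s1 + l))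
    (lt3' : (t3' + 1 = t1') ∨ (t1' = 0 ∧ t3' = 2*k))
    (lt4' : (t4' + (k+1) = t1') ∨ (t1' ≤ k ∧ t4' = t1' + k))
    (ls2' : (s2' + l = s1') ∨ (s1' < l ∧ s2' = s1' + l + 1))
    (ls3' : (s3' + (l+1) = s1') ∨ (s1' ≤ l ∧ s3' = s1' + l))
    (e1 : min t1 (2*k+1 - t1) + min s1 (2*l+1 - s1)
        = min t1' (2*k+1 - t1') + min s1' (2*l+1 - s1'))
    (e2 : min t1 (2*k+1 - t1) + min s2 (2*l+1 - s2)
        = min t1' (2*k+1 - t1') + min s2' (2*l+1 - s2'))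
    (e3 : min t3 (2*k+1 - t3) + min s3 (2*l+1 - s3)
        = min t3' (2*k+1 - t3') + min s3' (2*l+1 - s3'))
    (e4 : min t4 (2*k+1 - t4) + min s3 (2*l+1 - s3)
        = min t4' (2*k+1 - t4') + min s3' (2*l+1 - s3')) :
    t1 = t1' ∧ s1 = s1' := by
  have hs : s1 = s1' := by
    refine y_cross_same l (2*l+1) s1 s2 s1' s2' hl (Or.inr rfl) hs1 hs1' ls2 ls2' ?_
    clear lt3 lt4 lt3' lt4' ls3 ls3' e3 e4
    omega
  refine ⟨x_finish_same k (2*k+1) t1 t3 t1' t3' hk (Or.inr rfl) ht1 ht1' lt3 lt3' ?_ ?_, hs⟩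
  · clear lt3 lt4 lt3' lt4' ls3 ls3' e2 e3 e4
    omega
  · clear lt3 lt4 lt3' lt4' ls2 ls2' e1 e2 e4
    omega

theorem arith_HH (k l t1 t3 t4 s1 s2 s3 t1' t3' t4' s1' s2' s3' : ℕ)
    (hk : 1 ≤ k) (hl : 1 ≤ l)
    (ht1 : t1 ≤ 2*k) (ht1' : t1' ≤ 2*k) (hs1 : s1 ≤ 2*l) (hs1' : s1' ≤ 2*l)
    (lt3 : (t3 + 1 = t1) ∨ (t1 = 0 ∧ t3 = 2*k))
    (lt4 : (t4 + (k+1) = t1) ∨ (t1 ≤ k ∧ t4 = t1 + k))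
    (ls2 : (s2 + l = s1) ∨ (s1 < l ∧ s2 = s1 + l + 1))
    (ls3 : (s3 + (l+1) = s1) ∨ (s1 ≤ l ∧ s3 = s1 + l))
    (lt3' : (t3' + 1 = t1') ∨ (t1' = 0 ∧ t3' = 2*k))
    (lt4' : (t4' + (k+1) = t1') ∨ (t1' ≤ k ∧ t4' = t1' + k))
    (ls2' : (s2' + l = s1') ∨ (s1' < l ∧ s2' = s1' + l + 1))
    (ls3' : (s3' + (l+1) = s1') ∨ (s1' ≤ l ∧ s3' = s1' + l))
    (e1 : min t1 (2*k - t1) + min s1 (2*l+1 - s1)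
        = min t1' (2*k - t1') + min s1' (2*l+1 - s1'))
    (e2 : min t1 (2*k - t1) + min s2 (2*l+1 - s2)
        = min t1' (2*k - t1') + min s2' (2*l+1 - s2'))
    (e3 : min t3 (2*k - t3) + min s3 (2*l+1 - s3)
        = min t3' (2*k - t3') + min s3' (2*l+1 - s3'))
    (e4 : min t4 (2*k - t4) + min s3 (2*l+1 - s3)
        = min t4' (2*k - t4') + min s3' (2*l+1 - s3')) :
    t1 = t1' ∧ s1 = s1' := by
  have hs : s1 = s1' := by
    refine y_cross_same l (2*l+1) s1 s2 s1' s2' hl (Or.inr rfl) hs1 hs1' ls2 ls2' ?_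
    clear lt3 lt4 lt3' lt4' ls3 ls3' e3 e4
    omega
  refine ⟨x_finish_same k (2*k) t1 t3 t1' t3' hk (Or.inl rfl) ht1 ht1' lt3 lt3' ?_ ?_, hs⟩
  · clear lt3 lt4 lt3' lt4' ls3 ls3' e2 e3 e4
    omega
  · clear lt3 lt4 lt3' lt4' ls2 ls2' e1 e2 e4
    omega

theorem arith_VeVe (k l t1 t3 t4 s1 s2 s3 t1' t3' t4' s1' s2' s3' : ℕ)
    (hk : 1 ≤ k) (hl : 1 ≤ l)
    (ht1 : t1 ≤ 2*k) (ht1' : t1' ≤ 2*k) (hs1 : s1 ≤ 2*l) (hs1' : s1' ≤ 2*l)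
    (lt3 : (t3 + 1 = t1) ∨ (t1 = 0 ∧ t3 = 2*k))
    (lt4 : (t4 + (k+1) = t1) ∨ (t1 ≤ k ∧ t4 = t1 + k))
    (ls2 : (s2 + l = s1) ∨ (s1 < l ∧ s2 = s1 + l + 1))
    (ls3 : (s3 + (l+1) = s1) ∨ (s1 ≤ l ∧ s3 = s1 + l))
    (lt3' : (t3' + 1 = t1') ∨ (t1' = 0 ∧ t3' = 2*k))
    (lt4' : (t4' + (k+1) = t1') ∨ (t1' ≤ k ∧ t4' = t1' + k))
    (ls2' : (s2' + l = s1') ∨ (s1' < l ∧ s2' = s1' + l + 1))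
    (ls3' : (s3' + (l+1) = s1') ∨ (s1' ≤ l ∧ s3' = s1' + l))
    (e1 : min t1 (2*k+1 - t1) + min s1 (2*l - s1)
        = min t1' (2*k+1 - t1') + min s1' (2*l - s1'))
    (e2 : min t1 (2*k+1 - t1) + min s2 (2*l - s2)
        = min t1' (2*k+1 - t1') + min s2' (2*l - s2'))
    (e3 : min t3 (2*k+1 - t3) + min s3 (2*l - s3)
        = min t3' (2*k+1 - t3') + min s3' (2*l - s3'))
    (e4 : min t4 (2*k+1 - t4) + min s3 (2*l - s3)
        = min t4' (2*k+1 - t4') + min s3' (2*l - s3')) :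
    t1 = t1' ∧ s1 = s1' := by
  have hs : s1 = s1' := by
    refine y_cross_same l (2*l) s1 s2 s1' s2' hl (Or.inl rfl) hs1 hs1' ls2 ls2' ?_
    clear lt3 lt4 lt3' lt4' ls3 ls3' e3 e4
    omega
  refine ⟨x_finish_same k (2*k+1) t1 t3 t1' t3' hk (Or.inr rfl) ht1 ht1' lt3 lt3' ?_ ?_, hs⟩
  · clear lt3 lt4 lt3' lt4' ls3 ls3' e2 e3 e4
    omega
  · clear lt3 lt4 lt3' lt4' ls2 ls2' e1 e2 e4
    omega

theorem arith_VH (k l t1 t3 t4 s1 s2 s3 t1' t3' t4' s1' s2' s3' : ℕ)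
    (hk : 1 ≤ k) (hl : 1 ≤ l)
    (ht1 : t1 ≤ 2*k) (ht1' : t1' ≤ 2*k) (hs1 : s1 ≤ 2*l) (hs1' : s1' ≤ 2*l)
    (lt3 : (t3 + 1 = t1) ∨ (t1 = 0 ∧ t3 = 2*k))
    (lt4 : (t4 + (k+1) = t1) ∨ (t1 ≤ k ∧ t4 = t1 + k))
    (ls2 : (s2 + l = s1) ∨ (s1 < l ∧ s2 = s1 + l + 1))
    (ls3 : (s3 + (l+1) = s1) ∨ (s1 ≤ l ∧ s3 = s1 + l))
    (lt3' : (t3' + 1 = t1') ∨ (t1' = 0 ∧ t3' = 2*k))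
    (lt4' : (t4' + (k+1) = t1') ∨ (t1' ≤ k ∧ t4' = t1' + k))
    (ls2' : (s2' + l = s1') ∨ (s1' < l ∧ s2' = s1' + l + 1))
    (ls3' : (s3' + (l+1) = s1') ∨ (s1' ≤ l ∧ s3' = s1' + l))
    (e1 : min t1 (2*k+1 - t1) + min s1 (2*l+1 - s1)
        = min t1' (2*k - t1') + min s1' (2*l+1 - s1'))
    (e2 : min t1 (2*k+1 - t1) + min s2 (2*l+1 - s2)
        = min t1' (2*k - t1') + min s2' (2*l+1 - s2'))
    (e3 : min t3 (2*k+1 - t3) + min s3 (2*l+1 - s3)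
        = min t3' (2*k - t3') + min s3' (2*l+1 - s3'))
    (e4 : min t4 (2*k+1 - t4) + min s3 (2*l+1 - s3)
        = min t4' (2*k - t4') + min s3' (2*l+1 - s3')) :
    False := by
  have hs : s1 = s1' := by
    refine y_cross_same l (2*l+1) s1 s2 s1' s2' hl (Or.inr rfl) hs1 hs1' ls2 ls2' ?_
    clear lt3 lt4 lt3' lt4' ls3 ls3' e3 e4
    omega
  refine x_contra_VH k t1 t3 t4 t1' t3' t4' hk ht1 ht1' lt3 lt4 lt3' lt4' ?_ ?_ ?_
  · clear lt3 lt4 lt3' lt4' ls3 ls3' e2 e3 e4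
    omega
  · clear lt3 lt4 lt3' lt4' ls2 ls2' e1 e2 e4
    omega
  · clear lt3 lt4 lt3' lt4' ls2 ls2' e1 e2 e3
    omega

theorem arith_VVe (k l t1 t3 t4 s1 s2 s3 t1' t3' t4' s1' s2' s3' : ℕ)
    (hk : 1 ≤ k) (hl : 1 ≤ l)
    (ht1 : t1 ≤ 2*k) (ht1' : t1' ≤ 2*k) (hs1 : s1 ≤ 2*l) (hs1' : s1' ≤ 2*l)
    (lt3 : (t3 + 1 = t1) ∨ (t1 = 0 ∧ t3 = 2*k))
    (lt4 : (t4 + (k+1) = t1) ∨ (t1 ≤ k ∧ t4 = t1 + k))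
    (ls2 : (s2 + l = s1) ∨ (s1 < l ∧ s2 = s1 + l + 1))
    (ls3 : (s3 + (l+1) = s1) ∨ (s1 ≤ l ∧ s3 = s1 + l))
    (lt3' : (t3' + 1 = t1') ∨ (t1' = 0 ∧ t3' = 2*k))
    (lt4' : (t4' + (k+1) = t1') ∨ (t1' ≤ k ∧ t4' = t1' + k))
    (ls2' : (s2' + l = s1') ∨ (s1' < l ∧ s2' = s1' + l + 1))
    (ls3' : (s3' + (l+1) = s1') ∨ (s1' ≤ l ∧ s3' = s1' + l))
    (e1 : min t1 (2*k+1 - t1) + min s1 (2*l+1 - s1)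
        = min t1' (2*k+1 - t1') + min s1' (2*l - s1'))
    (e2 : min t1 (2*k+1 - t1) + min s2 (2*l+1 - s2)
        = min t1' (2*k+1 - t1') + min s2' (2*l - s2'))
    (e3 : min t3 (2*k+1 - t3) + min s3 (2*l+1 - s3)
        = min t3' (2*k+1 - t3') + min s3' (2*l - s3'))
    (e4 : min t4 (2*k+1 - t4) + min s3 (2*l+1 - s3)
        = min t4' (2*k+1 - t4') + min s3' (2*l - s3')) :
    False := by
  have ht : t1 = t1' := by
    refine x_cross_same k (2*k+1) t1 t3 t4 t1' t3' t4' hk (Or.inr rfl) ht1 ht1'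
      lt3 lt4 lt3' lt4' ?_
    clear lt3 lt4 lt3' lt4' ls2 ls2' e1 e2
    omega
  refine y_contra_VVe l s1 s2 s3 s1' s2' s3' hl hs1 hs1' ls2 ls3 ls2' ls3' ?_ ?_ ?_
  · clear lt3 lt4 lt3' lt4' ls2 ls2' ls3 ls3' e2 e3 e4
    omega
  · clear lt3 lt4 lt3' lt4' ls3 ls3' e1 e3 e4
    omega
  · clear lt4 lt4' ls2 ls2' e1 e2 e4
    omega

theorem arith_HVe (k l t1 t3 t4 s1 s2 s3 t1' t3' t4' s1' s2' s3' : ℕ)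
    (hk : 1 ≤ k) (hl : 1 ≤ l)
    (ht1 : t1 ≤ 2*k) (ht1' : t1' ≤ 2*k) (hs1 : s1 ≤ 2*l) (hs1' : s1' ≤ 2*l)
    (lt3 : (t3 + 1 = t1) ∨ (t1 = 0 ∧ t3 = 2*k))
    (lt4 : (t4 + (k+1) = t1) ∨ (t1 ≤ k ∧ t4 = t1 + k))
    (ls2 : (s2 + l = s1) ∨ (s1 < l ∧ s2 = s1 + l + 1))
    (ls3 : (s3 + (l+1) = s1) ∨ (s1 ≤ l ∧ s3 = s1 + l))
    (lt3' : (t3' + 1 = t1') ∨ (t1' = 0 ∧ t3' = 2*k))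
    (lt4' : (t4' + (k+1) = t1') ∨ (t1' ≤ k ∧ t4' = t1' + k))
    (ls2' : (s2' + l = s1') ∨ (s1' < l ∧ s2' = s1' + l + 1))
    (ls3' : (s3' + (l+1) = s1') ∨ (s1' ≤ l ∧ s3' = s1' + l))
    (e1 : min t1 (2*k - t1) + min s1 (2*l+1 - s1)
        = min t1' (2*k+1 - t1') + min s1' (2*l - s1'))
    (e2 : min t1 (2*k - t1) + min s2 (2*l+1 - s2)
        = min t1' (2*k+1 - t1') + min s2' (2*l - s2'))
    (e3 : min t3 (2*k - t3) + min s3 (2*l+1 - s3)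
        = min t3' (2*k+1 - t3') + min s3' (2*l - s3'))
    (e4 : min t4 (2*k - t4) + min s3 (2*l+1 - s3)
        = min t4' (2*k+1 - t4') + min s3' (2*l - s3')) :
    False := by
  have hy : s1 + s1' = 2*l := by
    refine y_cross_HVe l s1 s2 s1' s2' hl hs1 hs1' ls2 ls2' ?_
    clear lt3 lt4 lt3' lt4' ls3 ls3' e3 e4
    omega
  have hx : t1 + t1' = 1 ∨ t1 + t1' = 2*k + 2 := by
    refine x_cross_HVe k t1 t3 t4 t1' t3' t4' hk ht1 ht1' lt3 lt4 lt3' lt4' ?_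
    clear lt3 lt4 lt3' lt4' ls2 ls2' e1 e2
    omega
  exact HVe_contra k l t1 t3 s1 s3 t1' t3' s1' s3' hk hl ht1 ht1' hs1 hs1'
    lt3 lt3' ls3 ls3' hx hy e1 e3

lemma cyc_adj {m : ℕ} {u v : ZMod m} :
    (cycleZ m).Adj u v ↔ u ≠ v ∧ (u - v = 1 ∨ v - u = 1) := by
  simp [cycleZ, SimpleGraph.fromRel_adj]

lemma cyc_adj_add_one {m : ℕ} (hm : 2 ≤ m) (u : ZMod m) : (cycleZ m).Adj u (u + 1) := by
  haveI : Fact (1 < m) := ⟨hm⟩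
  rw [cyc_adj]
  constructor
  · intro h
    have : (1 : ZMod m) = 0 := by linear_combination h.symm  -- u = u + 1 → 0 = 1
    simpa using this
  · right; ring

/-- a walk going up t steps -/
lemma exists_walk_up {m : ℕ} (hm : 2 ≤ m) (u : ZMod m) (t : ℕ) :
    ∃ p : (cycleZ m).Walk u (u + (t : ZMod m)), p.length = t := by
  induction t with
  | zero => exact ⟨(SimpleGraph.Walk.nil).copy rfl (by push_cast; ring), by simp⟩
  | succ t ih =>
    obtain ⟨p, hp⟩ := ih
    exact ⟨(p.concat (cyc_adj_add_one hm _)).copy rfl (by push_cast; ring),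
      by simp [hp]⟩

lemma cyc_dist_le {m : ℕ} (hm : 2 ≤ m) (u v : ZMod m) :
    (cycleZ m).dist u v ≤ min ((v - u).val) (m - (v - u).val) := by
  haveI : NeZero m := ⟨by omega⟩
  have h1 : (cycleZ m).dist u v ≤ (v - u).val := by
    obtain ⟨p, hp⟩ := exists_walk_up hm u ((v - u).val)
    have : u + (((v - u).val : ℕ) : ZMod m) = v := by
      rw [ZMod.natCast_rightInverse (v - u)]; ring
    calc (cycleZ m).dist u v = (cycleZ m).dist u (u + (((v-u).val : ℕ) : ZMod m)) := by rw [this]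
    _ ≤ p.length := SimpleGraph.dist_le p
    _ = _ := hp
  have h2 : (cycleZ m).dist u v ≤ m - (v - u).val := by
    obtain ⟨p, hp⟩ := exists_walk_up hm v (m - (v - u).val)
    have : v + (((m - (v - u).val) : ℕ) : ZMod m) = u := by
      push_cast [Nat.cast_sub (le_of_lt (ZMod.val_lt (v - u)))]
      rw [ZMod.natCast_rightInverse (v - u), ZMod.natCast_self]
      ring
    rw [SimpleGraph.dist_comm]
    calc (cycleZ m).dist v u = (cycleZ m).dist v (v + ((m - (v-u).val : ℕ) : ZMod m)) := by
          rw [this]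
    _ ≤ p.length := SimpleGraph.dist_le p
    _ = _ := hp
  omega

lemma cyc_reachable {m : ℕ} (hm : 2 ≤ m) (u v : ZMod m) : (cycleZ m).Reachable u v := by
  haveI : NeZero m := ⟨by omega⟩
  obtain ⟨p, _⟩ := exists_walk_up hm u ((v - u).val)
  have : u + (((v - u).val : ℕ) : ZMod m) = v := by
    rw [ZMod.natCast_rightInverse (v - u)]; ring
  exact ⟨p.copy rfl this⟩

/-- potential function lower bound -/
lemma potential_le_walk {V : Type*} {G : SimpleGraph V} (f : V → ℕ)
    (hf : ∀ a b, G.Adj a b → f a ≤ f b + 1) {u v : V} (p : G.Walk u v) :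
    f u ≤ f v + p.length := by
  induction p with
  | nil => simp
  | cons h q ih =>
    have h1 := hf _ _ h
    simp only [SimpleGraph.Walk.length_cons]
    omega

lemma val_add_disj {m : ℕ} [NeZero m] (x y : ZMod m) :
    (x + y).val = x.val + y.val ∨ (x + y).val + m = x.val + y.val := by
  rw [ZMod.val_add]
  have hx := ZMod.val_lt x
  have hy := ZMod.val_lt y
  rcases lt_or_ge (x.val + y.val) m with h | h
  · left; exact Nat.mod_eq_of_lt h
  · right
    rw [Nat.mod_eq_sub_mod h, Nat.mod_eq_of_lt (by omega)]
    omega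

lemma val_sub_link {m : ℕ} [NeZero m] (x y : ZMod m) :
    (x - y).val + y.val = x.val ∨ (x - y).val + y.val = x.val + m := by
  have h := val_add_disj (x - y) y
  rw [sub_add_cancel] at h
  omega

lemma cyc_lip {m : ℕ} (hm : 3 ≤ m) {x a b : ZMod m} (h : (cycleZ m).Adj a b) :
    min ((x - a).val) (m - (x - a).val) ≤ min ((x - b).val) (m - (x - b).val) + 1 := by
  haveI : NeZero m := ⟨by omega⟩
  haveI : Fact (1 < m) := ⟨by omega⟩
  have hva := ZMod.val_lt (x - a)
  have hvb := ZMod.val_lt (x - b)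
  rcases (cyc_adj.mp h).2 with h1 | h1
  · -- a - b = 1, so x - b = (x - a) + 1
    have key : x - b = (x - a) + 1 := by linear_combination h1
    have hv := val_add_disj (x - a) 1
    rw [← key, ZMod.val_one] at hv
    omega
  · -- b - a = 1, so x - a = (x - b) + 1
    have key : x - a = (x - b) + 1 := by linear_combination h1
    have hv := val_add_disj (x - b) 1
    rw [← key, ZMod.val_one] at hv
    omega

theorem torus_dist {m n : ℕ} (hm : 3 ≤ m) (hn : 3 ≤ n) (w v : ZMod m × ZMod n) :
    (torus m n).dist w v
      = min ((v.1 - w.1).val) (m - (v.1 - w.1).val)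
        + min ((v.2 - w.2).val) (n - (v.2 - w.2).val) := by
  haveI : NeZero m := ⟨by omega⟩
  haveI : NeZero n := ⟨by omega⟩
  obtain ⟨w1, w2⟩ := w
  obtain ⟨v1, v2⟩ := v
  dsimp only
  obtain ⟨p1, hp1⟩ := (cyc_reachable (by omega) w1 v1).exists_walk_length_eq_dist
  obtain ⟨p2, hp2⟩ := (cyc_reachable (by omega) w2 v2).exists_walk_length_eq_dist
  have hdle := cyc_dist_le (by omega : 2 ≤ m) w1 v1
  have hdle2 := cyc_dist_le (by omega : 2 ≤ n) w2 v2
  set P : (torus m n).Walk (w1, w2) (v1, v2) :=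
    (p1.boxProdLeft (cycleZ n) w2).append (p2.boxProdRight (cycleZ m) v1) with hP
  have hlen : P.length = p1.length + p2.length := by
    simp [hP, SimpleGraph.Walk.length_append, SimpleGraph.Walk.boxProdLeft,
      SimpleGraph.Walk.boxProdRight, SimpleGraph.Walk.length_map]
    exact (SimpleGraph.Walk.length_append _ _).trans
      (congrArg₂ (· + ·) (SimpleGraph.Walk.length_map _ _) (SimpleGraph.Walk.length_map _ _))
  apply le_antisymm
  · calc (torus m n).dist (w1, w2) (v1, v2) ≤ P.length := SimpleGraph.dist_le P
    _ = p1.length + p2.length := hlen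
    _ ≤ _ := by rw [hp1, hp2]; omega
  · -- lower bound via potential
    set f : ZMod m × ZMod n → ℕ := fun z =>
      min ((v1 - z.1).val) (m - (v1 - z.1).val) + min ((v2 - z.2).val) (n - (v2 - z.2).val)
      with hf
    have hlip : ∀ a b, (torus m n).Adj a b → f a ≤ f b + 1 := by
      rintro ⟨a1, a2⟩ ⟨b1, b2⟩ hab
      show min ((v1 - a1).val) (m - (v1 - a1).val) + min ((v2 - a2).val) (n - (v2 - a2).val)
        ≤ min ((v1 - b1).val) (m - (v1 - b1).val) + min ((v2 - b2).val) (n - (v2 - b2).val) + 1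
      rcases (SimpleGraph.boxProd_adj.mp hab) with ⟨h1, h2⟩ | ⟨h1, h2⟩
      · have := cyc_lip hm (x := v1) h1
        dsimp only at h2 this
        rw [h2]
        omega
      · have := cyc_lip hn (x := v2) h1
        dsimp only at h2 this
        rw [h2]
        omega
    have hreach : (torus m n).Reachable (w1, w2) (v1, v2) := ⟨P⟩
    obtain ⟨q, hq⟩ := hreach.exists_walk_length_eq_dist
    have hfv : f (v1, v2) = 0 := by simp [hf]
    have := potential_le_walk f hlip q
    rw [hfv, hq] at this
    simpa [hf] using this

lemma edist_mk {V : Type*} (G : SimpleGraph V) (w u v : V) :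
    edist G w s(u, v) = min (G.dist w u) (G.dist w v) := rfl

lemma edge_rep {m n : ℕ} (hm : 3 ≤ m) (hn : 3 ≤ n) {e : Sym2 (ZMod m × ZMod n)}
    (he : e ∈ (torus m n).edgeSet) :
    (∃ a b, e = s((a, b), (a + 1, b))) ∨ (∃ a b, e = s((a, b), (a, b + 1))) := by
  induction e with
  | _ x y =>
    rw [SimpleGraph.mem_edgeSet] at he
    obtain ⟨x1, x2⟩ := x
    obtain ⟨y1, y2⟩ := y
    rcases SimpleGraph.boxProd_adj.mp he with ⟨h1, h2⟩ | ⟨h1, h2⟩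
    · dsimp only at h1 h2
      subst h2
      rcases (cyc_adj.mp h1).2 with h | h
    
      · have hx : x1 = y1 + 1 := by linear_combination h
        subst hx
        exact Or.inl ⟨y1, x2, Sym2.eq_swap⟩
      · have hy : y1 = x1 + 1 := by linear_combination h
        subst hy
        exact Or.inl ⟨x1, x2, rfl⟩
    · dsimp only at h1 h2
      subst h2
      rcases (cyc_adj.mp h1).2 with h | h
      · have hx : x2 = y2 + 1 := by linear_combination h
        subst hx
        exact Or.inr ⟨x1, y2, Sym2.eq_swap⟩
      · have hy : y2 = x2 + 1 := by linear_combination h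
        subst hy
        exact Or.inr ⟨x1, x2, rfl⟩

lemma edist_H {m n : ℕ} (hm : 3 ≤ m) (hn : 3 ≤ n) (w : ZMod m × ZMod n) (a : ZMod m)
    (b : ZMod n) :
    edist (torus m n) w s((a, b), (a + 1, b))
      = min ((a - w.1).val) (m - 1 - (a - w.1).val)
        + min ((b - w.2).val) (n - (b - w.2).val) := by
  haveI : NeZero m := ⟨by omega⟩
  haveI : NeZero n := ⟨by omega⟩
  haveI : Fact (1 < m) := ⟨by omega⟩
  rw [edist_mk, torus_dist hm hn, torus_dist hm hn]
  dsimp only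
  have key : a + 1 - w.1 = (a - w.1) + 1 := by ring
  rw [key]
  have hrel := val_add_disj (a - w.1) 1
  rw [ZMod.val_one] at hrel
  have h1 := ZMod.val_lt (a - w.1)
  have h2 := ZMod.val_lt ((a - w.1) + 1)
  have h3 := ZMod.val_lt (b - w.2)
  omega

lemma edist_Ve {m n : ℕ} (hm : 3 ≤ m) (hn : 3 ≤ n) (w : ZMod m × ZMod n) (a : ZMod m)
    (b : ZMod n) :
    edist (torus m n) w s((a, b), (a, b + 1))
      = min ((a - w.1).val) (m - (a - w.1).val)
        + min ((b - w.2).val) (n - 1 - (b - w.2).val) := by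
  haveI : NeZero m := ⟨by omega⟩
  haveI : NeZero n := ⟨by omega⟩
  haveI : Fact (1 < n) := ⟨by omega⟩
  rw [edist_mk, torus_dist hm hn, torus_dist hm hn]
  dsimp only
  have key : b + 1 - w.2 = (b - w.2) + 1 := by ring
  rw [key]
  have hrel := val_add_disj (b - w.2) 1
  rw [ZMod.val_one] at hrel
  have h1 := ZMod.val_lt (b - w.2)
  have h2 := ZMod.val_lt ((b - w.2) + 1)
  have h3 := ZMod.val_lt (a - w.1)
  omega


lemma val_add_disj' {m : ℕ} [NeZero m] (x y : ZMod m) :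
    (x + y).val = x.val + y.val ∨ (x + y).val + m = x.val + y.val := by
  rw [ZMod.val_add]
  have hx := ZMod.val_lt x
  have hy := ZMod.val_lt y
  rcases lt_or_ge (x.val + y.val) m with h | h
  · left; exact Nat.mod_eq_of_lt h
  · right; rw [Nat.mod_eq_sub_mod h, Nat.mod_eq_of_lt (by omega)]; omega

lemma val_sub_link' {m : ℕ} [NeZero m] (x y : ZMod m) :
    (x - y).val + y.val = x.val ∨ (x - y).val + y.val = x.val + m := by
  have h := val_add_disj' (x - y) y
  rw [sub_add_cancel] at h
  omega

lemma links_pack {k l : ℕ} (hk : 1 ≤ k) (hl : 1 ≤ l)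
    (a : ZMod (2*k+1)) (b : ZMod (2*l+1)) :
    (a.val ≤ 2*k) ∧ (b.val ≤ 2*l) ∧
    ((a - 1).val + 1 = a.val ∨ (a.val = 0 ∧ (a - 1).val = 2*k)) ∧
    ((a - ((k : ZMod (2*k+1)) + 1)).val + (k+1) = a.val ∨
      (a.val ≤ k ∧ (a - ((k : ZMod (2*k+1)) + 1)).val = a.val + k)) ∧
    ((b - (l : ZMod (2*l+1))).val + l = b.val ∨
      (b.val < l ∧ (b - (l : ZMod (2*l+1))).val = b.val + l + 1)) ∧
    ((b - ((l : ZMod (2*l+1)) + 1)).val + (l+1) = b.val ∨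
      (b.val ≤ l ∧ (b - ((l : ZMod (2*l+1)) + 1)).val = b.val + l)) := by
  haveI : NeZero (2*k+1) := ⟨by omega⟩
  haveI : NeZero (2*l+1) := ⟨by omega⟩
  haveI : Fact (1 < 2*k+1) := ⟨by omega⟩
  have hv1 : (1 : ZMod (2*k+1)).val = 1 := ZMod.val_one _
  have hvk : ((k : ZMod (2*k+1)) + 1).val = k + 1 := by
    have : ((k : ZMod (2*k+1)) + 1) = ((k + 1 : ℕ) : ZMod (2*k+1)) := by push_cast; ring
    rw [this, ZMod.val_cast_of_lt (by omega)]
  have hvl : ((l : ZMod (2*l+1))).val = l := ZMod.val_cast_of_lt (by omega)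
  have hvl1 : ((l : ZMod (2*l+1)) + 1).val = l + 1 := by
    have : ((l : ZMod (2*l+1)) + 1) = ((l + 1 : ℕ) : ZMod (2*l+1)) := by push_cast; ring
    rw [this, ZMod.val_cast_of_lt (by omega)]
  have ha := ZMod.val_lt a
  have hb := ZMod.val_lt b
  have L1 := val_sub_link' a 1
  rw [hv1] at L1
  have L2 := val_sub_link' a ((k : ZMod (2*k+1)) + 1)
  rw [hvk] at L2
  have L3 := val_sub_link' b (l : ZMod (2*l+1))
  rw [hvl] at L3
  have L4 := val_sub_link' b ((l : ZMod (2*l+1)) + 1)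
  rw [hvl1] at L4
  have B1 := ZMod.val_lt (a - 1)
  have B2 := ZMod.val_lt (a - ((k : ZMod (2*k+1)) + 1))
  have B3 := ZMod.val_lt (b - (l : ZMod (2*l+1)))
  have B4 := ZMod.val_lt (b - ((l : ZMod (2*l+1)) + 1))
  refine ⟨by omega, by omega, by omega, by omega, by omega, by omega⟩

theorem stmt_9 (k l : Nat) (hk : 1 ≤ k) (hl : 1 ≤ l) :
    MixedResolvingSet (torus (2 * k + 1) (2 * l + 1))
      {((0 : ZMod (2 * k + 1)), (0 : ZMod (2 * l + 1))), (0, (l : ZMod (2 * l + 1))),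
        (1, ((l : ZMod (2 * l + 1)) + 1)),
        (((k : ZMod (2 * k + 1)) + 1), ((l : ZMod (2 * l + 1)) + 1))} ∧
    mixedDim (torus (2 * k + 1) (2 * l + 1)) ≤ 4 := by

  haveI : NeZero (2*k+1) := ⟨by omega⟩
  haveI : NeZero (2*l+1) := ⟨by omega⟩
  haveI : Fact (1 < 2*k+1) := ⟨by omega⟩
  have hm3 : (3:ℕ) ≤ 2*k+1 := by omega
  have hn3 : (3:ℕ) ≤ 2*l+1 := by omega
  have hMRS : MixedResolvingSet (torus (2 * k + 1) (2 * l + 1))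
      {((0 : ZMod (2 * k + 1)), (0 : ZMod (2 * l + 1))), (0, (l : ZMod (2 * l + 1))),
        (1, ((l : ZMod (2 * l + 1)) + 1)),
        (((k : ZMod (2 * k + 1)) + 1), ((l : ZMod (2 * l + 1)) + 1))} := by
    refine ⟨?_, ?_, ?_⟩
    · -- vertex pairs
      intro u v huv
      by_contra hc
      push_neg at hc
      obtain ⟨a, b⟩ := u
      obtain ⟨a', b'⟩ := v
      have E1 := hc (0, 0) (by simp)
      have E2 := hc (0, (l : ZMod (2*l+1))) (by simp)
      have E3 := hc (1, (l : ZMod (2*l+1)) + 1) (by simp)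
      have E4 := hc ((k : ZMod (2*k+1)) + 1, (l : ZMod (2*l+1)) + 1) (by simp)
      rw [torus_dist hm3 hn3, torus_dist hm3 hn3] at E1 E2 E3 E4
      dsimp only at E1 E2 E3 E4
      simp only [sub_zero] at E1 E2 E3 E4
      obtain ⟨ht1, hs1, lt3, lt4, ls2, ls3⟩ := links_pack hk hl a b
      obtain ⟨ht1', hs1', lt3', lt4', ls2', ls3'⟩ := links_pack hk hl a' b'
      obtain ⟨h1, h2⟩ := arith_VV k l a.val (a - 1).val (a - ((k : ZMod (2*k+1)) + 1)).val
        b.val (b - (l : ZMod (2*l+1))).val (b - ((l : ZMod (2*l+1)) + 1)).val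
        a'.val (a' - 1).val (a' - ((k : ZMod (2*k+1)) + 1)).val
        b'.val (b' - (l : ZMod (2*l+1))).val (b' - ((l : ZMod (2*l+1)) + 1)).val
        hk hl ht1 ht1' hs1 hs1' lt3 lt4 ls2 ls3 lt3' lt4' ls2' ls3' E1 E2 E3 E4
      exact huv (by rw [ZMod.val_injective _ h1, ZMod.val_injective _ h2])
    · -- edge pairs
      intro e he f hf hef
      by_contra hc
      push_neg at hc
      rcases edge_rep hm3 hn3 he with ⟨a, b, rfl⟩ | ⟨a, b, rfl⟩ <;>
        rcases edge_rep hm3 hn3 hf with ⟨a', b', rfl⟩ | ⟨a', b', rfl⟩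
      · -- H H
        have E1 := hc (0, 0) (by simp)
        have E2 := hc (0, (l : ZMod (2*l+1))) (by simp)
        have E3 := hc (1, (l : ZMod (2*l+1)) + 1) (by simp)
        have E4 := hc ((k : ZMod (2*k+1)) + 1, (l : ZMod (2*l+1)) + 1) (by simp)
        rw [edist_H hm3 hn3, edist_H hm3 hn3] at E1 E2 E3 E4
        dsimp only at E1 E2 E3 E4
        simp only [sub_zero, Nat.add_sub_cancel] at E1 E2 E3 E4
        obtain ⟨ht1, hs1, lt3, lt4, ls2, ls3⟩ := links_pack hk hl a b
        obtain ⟨ht1', hs1', lt3', lt4', ls2', ls3'⟩ := links_pack hk hl a' b'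
        obtain ⟨h1, h2⟩ := arith_HH k l a.val (a - 1).val (a - ((k : ZMod (2*k+1)) + 1)).val
          b.val (b - (l : ZMod (2*l+1))).val (b - ((l : ZMod (2*l+1)) + 1)).val
          a'.val (a' - 1).val (a' - ((k : ZMod (2*k+1)) + 1)).val
          b'.val (b' - (l : ZMod (2*l+1))).val (b' - ((l : ZMod (2*l+1)) + 1)).val
          hk hl ht1 ht1' hs1 hs1' lt3 lt4 ls2 ls3 lt3' lt4' ls2' ls3' E1 E2 E3 E4
        exact hef (by rw [ZMod.val_injective _ h1, ZMod.val_injective _ h2])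
      · -- H Ve
        have E1 := hc (0, 0) (by simp)
        have E2 := hc (0, (l : ZMod (2*l+1))) (by simp)
        have E3 := hc (1, (l : ZMod (2*l+1)) + 1) (by simp)
        have E4 := hc ((k : ZMod (2*k+1)) + 1, (l : ZMod (2*l+1)) + 1) (by simp)
        rw [edist_H hm3 hn3, edist_Ve hm3 hn3] at E1 E2 E3 E4
        dsimp only at E1 E2 E3 E4
        simp only [sub_zero, Nat.add_sub_cancel] at E1 E2 E3 E4
        obtain ⟨ht1, hs1, lt3, lt4, ls2, ls3⟩ := links_pack hk hl a b
        obtain ⟨ht1', hs1', lt3', lt4', ls2', ls3'⟩ := links_pack hk hl a' b'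
        exact arith_HVe k l a.val (a - 1).val (a - ((k : ZMod (2*k+1)) + 1)).val
          b.val (b - (l : ZMod (2*l+1))).val (b - ((l : ZMod (2*l+1)) + 1)).val
          a'.val (a' - 1).val (a' - ((k : ZMod (2*k+1)) + 1)).val
          b'.val (b' - (l : ZMod (2*l+1))).val (b' - ((l : ZMod (2*l+1)) + 1)).val
          hk hl ht1 ht1' hs1 hs1' lt3 lt4 ls2 ls3 lt3' lt4' ls2' ls3' E1 E2 E3 E4
      · -- Ve H
        have E1 := hc (0, 0) (by simp)
        have E2 := hc (0, (l : ZMod (2*l+1))) (by simp)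
        have E3 := hc (1, (l : ZMod (2*l+1)) + 1) (by simp)
        have E4 := hc ((k : ZMod (2*k+1)) + 1, (l : ZMod (2*l+1)) + 1) (by simp)
        rw [edist_Ve hm3 hn3, edist_H hm3 hn3] at E1 E2 E3 E4
        dsimp only at E1 E2 E3 E4
        simp only [sub_zero, Nat.add_sub_cancel] at E1 E2 E3 E4
        obtain ⟨ht1, hs1, lt3, lt4, ls2, ls3⟩ := links_pack hk hl a b
        obtain ⟨ht1', hs1', lt3', lt4', ls2', ls3'⟩ := links_pack hk hl a' b'
        exact arith_HVe k l a'.val (a' - 1).val (a' - ((k : ZMod (2*k+1)) + 1)).val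
          b'.val (b' - (l : ZMod (2*l+1))).val (b' - ((l : ZMod (2*l+1)) + 1)).val
          a.val (a - 1).val (a - ((k : ZMod (2*k+1)) + 1)).val
          b.val (b - (l : ZMod (2*l+1))).val (b - ((l : ZMod (2*l+1)) + 1)).val
          hk hl ht1' ht1 hs1' hs1 lt3' lt4' ls2' ls3' lt3 lt4 ls2 ls3
          E1.symm E2.symm E3.symm E4.symm
      · -- Ve Ve
        have E1 := hc (0, 0) (by simp)
        have E2 := hc (0, (l : ZMod (2*l+1))) (by simp)
        have E3 := hc (1, (l : ZMod (2*l+1)) + 1) (by simp)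
        have E4 := hc ((k : ZMod (2*k+1)) + 1, (l : ZMod (2*l+1)) + 1) (by simp)
        rw [edist_Ve hm3 hn3, edist_Ve hm3 hn3] at E1 E2 E3 E4
        dsimp only at E1 E2 E3 E4
        simp only [sub_zero, Nat.add_sub_cancel] at E1 E2 E3 E4
        obtain ⟨ht1, hs1, lt3, lt4, ls2, ls3⟩ := links_pack hk hl a b
        obtain ⟨ht1', hs1', lt3', lt4', ls2', ls3'⟩ := links_pack hk hl a' b'
        obtain ⟨h1, h2⟩ := arith_VeVe k l a.val (a - 1).val (a - ((k : ZMod (2*k+1)) + 1)).val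
          b.val (b - (l : ZMod (2*l+1))).val (b - ((l : ZMod (2*l+1)) + 1)).val
          a'.val (a' - 1).val (a' - ((k : ZMod (2*k+1)) + 1)).val
          b'.val (b' - (l : ZMod (2*l+1))).val (b' - ((l : ZMod (2*l+1)) + 1)).val
          hk hl ht1 ht1' hs1 hs1' lt3 lt4 ls2 ls3 lt3' lt4' ls2' ls3' E1 E2 E3 E4
        exact hef (by rw [ZMod.val_injective _ h1, ZMod.val_injective _ h2])
    · -- vertex vs edge
      intro u e he
      by_contra hc
      push_neg at hc
      obtain ⟨a, b⟩ := u
      rcases edge_rep hm3 hn3 he with ⟨a', b', rfl⟩ | ⟨a', b', rfl⟩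
      · -- V H
        have E1 := hc (0, 0) (by simp)
        have E2 := hc (0, (l : ZMod (2*l+1))) (by simp)
        have E3 := hc (1, (l : ZMod (2*l+1)) + 1) (by simp)
        have E4 := hc ((k : ZMod (2*k+1)) + 1, (l : ZMod (2*l+1)) + 1) (by simp)
        rw [torus_dist hm3 hn3, edist_H hm3 hn3] at E1 E2 E3 E4
        dsimp only at E1 E2 E3 E4
        simp only [sub_zero, Nat.add_sub_cancel] at E1 E2 E3 E4
        obtain ⟨ht1, hs1, lt3, lt4, ls2, ls3⟩ := links_pack hk hl a b
        obtain ⟨ht1', hs1', lt3', lt4', ls2', ls3'⟩ := links_pack hk hl a' b'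
        exact arith_VH k l a.val (a - 1).val (a - ((k : ZMod (2*k+1)) + 1)).val
          b.val (b - (l : ZMod (2*l+1))).val (b - ((l : ZMod (2*l+1)) + 1)).val
          a'.val (a' - 1).val (a' - ((k : ZMod (2*k+1)) + 1)).val
          b'.val (b' - (l : ZMod (2*l+1))).val (b' - ((l : ZMod (2*l+1)) + 1)).val
          hk hl ht1 ht1' hs1 hs1' lt3 lt4 ls2 ls3 lt3' lt4' ls2' ls3' E1 E2 E3 E4
      · -- V Ve
        have E1 := hc (0, 0) (by simp)
        have E2 := hc (0, (l : ZMod (2*l+1))) (by simp)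
        have E3 := hc (1, (l : ZMod (2*l+1)) + 1) (by simp)
        have E4 := hc ((k : ZMod (2*k+1)) + 1, (l : ZMod (2*l+1)) + 1) (by simp)
        rw [torus_dist hm3 hn3, edist_Ve hm3 hn3] at E1 E2 E3 E4
        dsimp only at E1 E2 E3 E4
        simp only [sub_zero, Nat.add_sub_cancel] at E1 E2 E3 E4
        obtain ⟨ht1, hs1, lt3, lt4, ls2, ls3⟩ := links_pack hk hl a b
        obtain ⟨ht1', hs1', lt3', lt4', ls2', ls3'⟩ := links_pack hk hl a' b'
        exact arith_VVe k l a.val (a - 1).val (a - ((k : ZMod (2*k+1)) + 1)).val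
          b.val (b - (l : ZMod (2*l+1))).val (b - ((l : ZMod (2*l+1)) + 1)).val
          a'.val (a' - 1).val (a' - ((k : ZMod (2*k+1)) + 1)).val
          b'.val (b' - (l : ZMod (2*l+1))).val (b' - ((l : ZMod (2*l+1)) + 1)).val
          hk hl ht1 ht1' hs1 hs1' lt3 lt4 ls2 ls3 lt3' lt4' ls2' ls3' E1 E2 E3 E4
  refine ⟨hMRS, ?_⟩
  apply Nat.sInf_le
  have hvl : ((l : ZMod (2*l+1))).val = l := ZMod.val_cast_of_lt (by omega)
  have hvl1 : ((l : ZMod (2*l+1)) + 1).val = l + 1 := by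
    have h : ((l : ZMod (2*l+1)) + 1) = ((l + 1 : ℕ) : ZMod (2*l+1)) := by push_cast; ring
    rw [h, ZMod.val_cast_of_lt (by omega)]
  have hv1 : (1 : ZMod (2*k+1)).val = 1 := ZMod.val_one _
  have hvk : ((k : ZMod (2*k+1)) + 1).val = k + 1 := by
    have h : ((k : ZMod (2*k+1)) + 1) = ((k + 1 : ℕ) : ZMod (2*k+1)) := by push_cast; ring
    rw [h, ZMod.val_cast_of_lt (by omega)]
  have d12 : ((0:ZMod (2*k+1)), (0:ZMod (2*l+1))) ≠ (0, (l : ZMod (2*l+1))) := by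
    intro h
    have h2 := congrArg (fun p : ZMod (2*k+1) × ZMod (2*l+1) => p.2.val) h
    simp only [ZMod.val_zero] at h2
    omega
  have d13 : ((0:ZMod (2*k+1)), (0:ZMod (2*l+1))) ≠ (1, (l : ZMod (2*l+1)) + 1) := by
    intro h
    have h2 := congrArg (fun p : ZMod (2*k+1) × ZMod (2*l+1) => p.1.val) h
    simp only [ZMod.val_zero, hv1] at h2
    omega
  have d14 : ((0:ZMod (2*k+1)), (0:ZMod (2*l+1)))
      ≠ ((k : ZMod (2*k+1)) + 1, (l : ZMod (2*l+1)) + 1) := by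
    intro h
    have h2 := congrArg (fun p : ZMod (2*k+1) × ZMod (2*l+1) => p.1.val) h
    simp only [ZMod.val_zero, hvk] at h2
    omega
  have d23 : ((0:ZMod (2*k+1)), (l : ZMod (2*l+1))) ≠ (1, (l : ZMod (2*l+1)) + 1) := by
    intro h
    have h2 := congrArg (fun p : ZMod (2*k+1) × ZMod (2*l+1) => p.1.val) h
    simp only [ZMod.val_zero, hv1] at h2
    omega
  have d24 : ((0:ZMod (2*k+1)), (l : ZMod (2*l+1)))
      ≠ ((k : ZMod (2*k+1)) + 1, (l : ZMod (2*l+1)) + 1) := by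
    intro h
    have h2 := congrArg (fun p : ZMod (2*k+1) × ZMod (2*l+1) => p.1.val) h
    simp only [ZMod.val_zero, hvk] at h2
    omega
  have d34 : ((1:ZMod (2*k+1)), (l : ZMod (2*l+1)) + 1)
      ≠ ((k : ZMod (2*k+1)) + 1, (l : ZMod (2*l+1)) + 1) := by
    intro h
    have h2 := congrArg (fun p : ZMod (2*k+1) × ZMod (2*l+1) => p.1.val) h
    simp only [hv1, hvk] at h2
    omega
  refine ⟨_, hMRS, ?_⟩
  rw [Set.ncard_insert_of_notMem (by
      simp only [Set.mem_insert_iff, Set.mem_singleton_iff, not_or, ← Prod.mk_zero_zero]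
      exact ⟨d12, d13, d14⟩),
    Set.ncard_insert_of_notMem (by simp [d23, d24]),
    Set.ncard_insert_of_notMem (by simp [d34]), Set.ncard_singleton]
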